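/- Let x, y ∈ ℂ with Re(y − x) > 1 and suppose y is not a nonpositive integer. Then the series Σ_{m=0}^∞ (x)_m/(y)_m converges and equals (y−1)/(y−x−1), where (x)_m = x(x+1)⋯(x+m−1) denotes the Pochhammer symbol (rising factorial), with (x)_0 = 1. -/

import Mathlib

open Filter Complex Asymptotics Finset Topology

private lemma asc_prod18 (z : ℂ) (n : ℕ) :
    (ascPochhammer ℂ n).eval z = ∏ j ∈ Finset.range n, (z + j) := by
  induction n with
  | zero => simp
  | succ n ih => rw [ascPochhammer_succ_eval, ih, Finset.prod_range_succ]

private lemma cpow_mul_linear_tendsto_zero18 {s : ℂ} (hs : s.re < -1) (a : ℂ) :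
    Tendsto (fun n : ℕ => (n : ℂ) ^ s * ((n : ℂ) + a)) atTop (𝓝 0) := by
  rw [tendsto_zero_iff_norm_tendsto_zero]
  have hb : Tendsto (fun n : ℕ => (n : ℝ) ^ (s.re + 1) + ‖a‖ * (n : ℝ) ^ s.re)
      atTop (𝓝 (0 + ‖a‖ * 0)) := by
    refine Tendsto.add ?_ (Tendsto.const_mul _ ?_)
    · have h1 : (0:ℝ) < -(s.re + 1) := by linarith
      have := (tendsto_rpow_neg_atTop h1).comp tendsto_natCast_atTop_atTop (α := ℕ)
      simpa [Function.comp_def] using this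
    · have h1 : (0:ℝ) < -s.re := by linarith
      have := (tendsto_rpow_neg_atTop h1).comp tendsto_natCast_atTop_atTop (α := ℕ)
      simpa [Function.comp_def] using this
  rw [show (0:ℝ) + ‖a‖ * 0 = 0 by ring] at hb
  refine squeeze_zero' (Eventually.of_forall fun n => norm_nonneg _) ?_ hb
  filter_upwards [eventually_ge_atTop 1] with n hn
  have hn0 : 0 < n := hn
  rw [norm_mul, Complex.norm_natCast_cpow_of_pos hn0]
  have h2 : ‖(n : ℂ) + a‖ ≤ (n : ℝ) + ‖a‖ := by
    calc ‖(n : ℂ) + a‖ ≤ ‖(n : ℂ)‖ + ‖a‖ := norm_add_le _ _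
    _ = (n : ℝ) + ‖a‖ := by simp
  calc (n : ℝ) ^ s.re * ‖(n : ℂ) + a‖ ≤ (n : ℝ) ^ s.re * ((n : ℝ) + ‖a‖) := by
        refine mul_le_mul_of_nonneg_left h2 (Real.rpow_nonneg (by positivity) _)
    _ = (n : ℝ) ^ (s.re + 1) + ‖a‖ * (n : ℝ) ^ s.re := by
        rw [Real.rpow_add_one (by positivity)]; ring

set_option maxHeartbeats 1000000 in
/-- For `x, y ∈ ℂ` with `Re(y − x) > 1` and `y` not a nonpositive integer, the series
`Σ_{m=0}^∞ (x)_m/(y)_m` of quotients of Pochhammer symbols (rising factorials)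
converges to `(y−1)/(y−x−1)`. -/
theorem statement18 (x y : ℂ) (h : 1 < (y - x).re) (hy : ∀ m : ℕ, y ≠ -(m : ℂ)) :
    HasSum (fun m : ℕ => (ascPochhammer ℂ m).eval x / (ascPochhammer ℂ m).eval y)
      ((y - 1) / (y - x - 1)) := by
  set t : ℕ → ℂ := fun m => (ascPochhammer ℂ m).eval x / (ascPochhammer ℂ m).eval y with ht
  set w : ℕ → ℂ := fun m =>
    (ascPochhammer ℂ m).eval x * (y + m - 1) / (ascPochhammer ℂ m).eval y with hw
  have hyne : ∀ m : ℕ, (ascPochhammer ℂ m).eval y ≠ 0 := by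
    intro m h0
    rw [ascPochhammer_eval_eq_zero_iff] at h0
    obtain ⟨k, _, hk⟩ := h0
    exact hy k (by linear_combination hk)
  have hym : ∀ m : ℕ, y + (m : ℂ) ≠ 0 := by
    intro m h0
    exact hy m (by linear_combination h0)
  have hd : y - x - 1 ≠ 0 := by
    intro h0
    have := congrArg Complex.re h0
    simp [Complex.sub_re] at this
    have h2 : (y - x).re = y.re - x.re := by simp [Complex.sub_re]
    linarith
  have hre : (x - y).re < -1 := by
    have : (y - x).re = y.re - x.re := by simp [Complex.sub_re]
    have h2 : (x - y).re = x.re - y.re := by simp [Complex.sub_re]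
    linarith
  -- telescoping
  have hstep : ∀ m : ℕ, t m = (w m - w (m + 1)) / (y - x - 1) := by
    intro m
    have h1 := hyne m
    have h2 := hym m
    rw [ht, hw]
    simp only [ascPochhammer_succ_eval]
    push_cast
    field_simp
    ring
  have hpart : ∀ n : ℕ, ∑ m ∈ Finset.range n, t m = (w 0 - w n) / (y - x - 1) := by
    intro n
    induction n with
    | zero => simp
    | succ n ih =>
      rw [Finset.sum_range_succ, ih, hstep n, ← add_div]
      ring_nf
  have hw0 : w 0 = y - 1 := by simp [hw]
  -- analytic part: w → 0 and summability
  have hmain : Tendsto w atTop (𝓝 0) ∧ Summable t := by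
    by_cases hx : ∀ m : ℕ, x ≠ -(m : ℂ)
    · -- x not a nonpositive integer: use GammaSeq asymptotics
      have hxne : ∀ m : ℕ, (ascPochhammer ℂ m).eval x ≠ 0 := by
        intro m h0
        rw [ascPochhammer_eval_eq_zero_iff] at h0
        obtain ⟨k, _, hk⟩ := h0
        exact hx k (by linear_combination hk)
      set g : ℕ → ℂ := fun n => Complex.GammaSeq y n / Complex.GammaSeq x n with hg
      have hgt : Tendsto g atTop (𝓝 (Complex.Gamma y / Complex.Gamma x)) :=
        (Complex.GammaSeq_tendsto_Gamma y).div (Complex.GammaSeq_tendsto_Gamma x)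
          (Complex.Gamma_ne_zero hx)
      have hkey : ∀ n : ℕ, 0 < n → t (n + 1) = (n : ℂ) ^ (x - y) * g n := by
        intro n hn
        have hn0 : (n : ℂ) ≠ 0 := Nat.cast_ne_zero.mpr hn.ne'
        have hxp : (n : ℂ) ^ x ≠ 0 := by simp [Complex.cpow_eq_zero_iff, hn0]
        have hyp : (n : ℂ) ^ y ≠ 0 := by simp [Complex.cpow_eq_zero_iff, hn0]
        have hfac : ((Nat.factorial n : ℕ) : ℂ) ≠ 0 := Nat.cast_ne_zero.mpr (Nat.factorial_ne_zero n)
        have hPx : (ascPochhammer ℂ (n + 1)).eval x ≠ 0 := hxne (n + 1)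
        have hPy : (ascPochhammer ℂ (n + 1)).eval y ≠ 0 := hyne (n + 1)
        rw [ht]
        simp only [hg, Complex.GammaSeq, ← asc_prod18]
        rw [Complex.cpow_sub _ _ hn0]
        field_simp
      have hwt : ∀ m : ℕ, w m = t m * (y + m - 1) := by
        intro m
        rw [hw, ht]
        simp only
        rw [div_mul_eq_mul_div]
      have hw' : ∀ n : ℕ, w (n + 2) =
          ((n + 1 : ℕ) : ℂ) ^ (x - y) * (((n + 1 : ℕ) : ℂ) + y) * g (n + 1) := by
        intro n
        rw [hwt, hkey (n + 1) (by omega)]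
        push_cast
        ring
      constructor
      · rw [← tendsto_add_atTop_iff_nat 2]
        refine Tendsto.congr' (Eventually.of_forall fun n => (hw' n).symm) ?_
        have base := (cpow_mul_linear_tendsto_zero18 hre y).mul hgt
        rw [zero_mul] at base
        exact base.comp (tendsto_add_atTop_nat 1)
      · rw [← summable_nat_add_iff 2]
        apply summable_of_isBigO_nat (g := fun n : ℕ => ((n + 1 : ℕ) : ℝ) ^ (x - y).re)
        · exact (summable_nat_add_iff 1).2 (Real.summable_nat_rpow.2 hre)
        · have h1 : (fun n : ℕ => ((n + 1 : ℕ) : ℂ) ^ (x - y)) =O[atTop]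
              (fun n : ℕ => ((n + 1 : ℕ) : ℝ) ^ (x - y).re) := by
            apply Asymptotics.isBigO_of_le
            intro n
            rw [Complex.norm_natCast_cpow_of_pos (by omega)]
            rw [Real.norm_of_nonneg (Real.rpow_nonneg (by positivity) _)]
          have h2 : (fun n : ℕ => g (n + 1)) =O[atTop] (fun _ : ℕ => (1 : ℝ)) :=
            (hgt.comp (tendsto_add_atTop_nat 1)).isBigO_one ℝ
          exact (h1.mul h2).congr'
            (Eventually.of_forall fun n => (hkey (n + 1) (by omega)).symm)
            (Eventually.of_forall fun n => mul_one _)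
    · push_neg at hx
      obtain ⟨k, hk⟩ := hx
      have hzero : ∀ m : ℕ, k + 1 ≤ m → (ascPochhammer ℂ m).eval x = 0 := by
        intro m hm
        rw [ascPochhammer_eval_eq_zero_iff]
        exact ⟨k, by omega, by rw [hk]; ring⟩
      constructor
      · refine Tendsto.congr' ?_ (tendsto_const_nhds (x := (0:ℂ)))
        filter_upwards [eventually_ge_atTop (k + 1)] with m hm
        simp only [hw]
        rw [hzero m hm, zero_mul, zero_div]
      · refine summable_of_ne_finset_zero (s := Finset.range (k + 1)) ?_
        intro m hm
        simp only [Finset.mem_range, not_lt] at hm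
        simp only [ht]
        rw [hzero m hm, zero_div]
  obtain ⟨hwlim, hsum⟩ := hmain
  have hS := hsum.hasSum
  have h1 : Tendsto (fun n => ∑ m ∈ Finset.range n, t m) atTop (𝓝 (∑' m, t m)) :=
    hS.tendsto_sum_nat
  have h2 : Tendsto (fun n => ∑ m ∈ Finset.range n, t m) atTop (𝓝 ((y - 1) / (y - x - 1))) := by
    simp only [hpart, hw0]
    have := (tendsto_const_nhds (x := y - 1) (f := atTop (α := ℕ))).sub hwlim
    rw [sub_zero] at this
    exact this.div_const _
  have := tendsto_nhds_unique h1 h2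
  rwa [this] at hS
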